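/- Existence of a finitely generated field of definition for a spanning set of invariants: Let k be an algebraically closed field of characteristic zero and K an algebraically closed field extension of k of infinite transcendence degree over k. Let R be a finitely generated commutative K-algebra equipped with a continuous semilinear action of Aut(K/k). Then there exists an intermediate field L of K/k, finitely generated over k, such that the subring R₁ of R consisting of the elements fixed by every σ ∈ Aut(K/k) that fixes L pointwise spans R as a K-vector space. -/
import Mathlib


/-- Existence of a finitely generated field of definition for a spanning set of
invariants. -/
theorem exists_fg_field_of_definition_of_spanning_invariants
    (k K : Type) [Field k] [CharZero k] [IsAlgClosed k] [Field K] [IsAlgClosed K] [Algebra k K]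
    -- `K` has infinite transcendence degree over `k`
    (htr : ∀ L : IntermediateField k K, L.FG → ∃ x : K, Transcendental L x)
    (R : Type) [CommRing R] [Algebra K R]
    -- `R` is a finitely generated `K`-algebra
    (hfg : Algebra.FiniteType K R)
    -- a semilinear action of `Aut(K/k)` on `R`
    (φ : (K ≃ₐ[k] K) →* (R ≃+* R))
    (hsemi : ∀ (σ : K ≃ₐ[k] K) (c : K) (r : R),
      φ σ (algebraMap K R c * r) = algebraMap K R (σ c) * φ σ r)
    -- continuity of the action
    (hcont : ∀ r : R, ∃ L : IntermediateField k K, L.FG ∧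
      ∀ σ : K ≃ₐ[k] K, (∀ x ∈ L, σ x = x) → φ σ r = r) :
    -- there is a finitely generated intermediate field `L` such that the elements fixed by
    -- every automorphism fixing `L` pointwise span `R` over `K`
    ∃ L : IntermediateField k K, L.FG ∧
      Submodule.span K
        {r : R | ∀ σ : K ≃ₐ[k] K, (∀ x ∈ L, σ x = x) → φ σ r = r} = ⊤ := by
  obtain ⟨s, hs⟩ := hfg.out
  -- choose a field of definition for each generator
  choose f hfFG hf using hcont
  refine ⟨s.sup f, ?_, ?_⟩
  · exact Finset.sup_induction IntermediateField.fg_bot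
      (fun a ha b hb => IntermediateField.fg_sup ha hb) (fun r _ => hfFG r)
  · set S : Set R := {r : R | ∀ σ : K ≃ₐ[k] K, (∀ x ∈ s.sup f, σ x = x) → φ σ r = r} with hS
    -- every generator lies in S
    have hgen : ∀ r ∈ s, r ∈ S := by
      intro r hr σ hσ
      exact hf r σ (fun x hx => hσ x (Finset.le_sup (f := f) hr hx))
    have hone : (1 : R) ∈ S := fun σ _ => map_one (φ σ)
    have hmulS : ∀ x ∈ S, ∀ y ∈ S, x * y ∈ S := by
      intro x hx y hy σ hσ
      rw [map_mul, hx σ hσ, hy σ hσ]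
    -- the span of S is closed under multiplication
    have hmul : ∀ x ∈ Submodule.span K S, ∀ y ∈ Submodule.span K S,
        x * y ∈ Submodule.span K S := by
      intro x hx y hy
      induction hx using Submodule.span_induction with
      | mem a ha =>
        induction hy using Submodule.span_induction with
        | mem b hb => exact Submodule.subset_span (hmulS a ha b hb)
        | zero => simpa using Submodule.zero_mem _
        | add b c _ _ hb hc => rw [mul_add]; exact Submodule.add_mem _ hb hc
        | smul c b _ hb => rw [mul_smul_comm]; exact Submodule.smul_mem _ _ hb
      | zero => simpa using Submodule.zero_mem _
      | add a b _ _ ha hb => rw [add_mul]; exact Submodule.add_mem _ ha hb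
      | smul c a _ ha => rw [smul_mul_assoc]; exact Submodule.smul_mem _ _ ha
    -- build the subalgebra whose underlying submodule is the span
    let T : Subalgebra K R :=
      { carrier := Submodule.span K S
        mul_mem' := fun {a b} ha hb => hmul a ha b hb
        add_mem' := fun {a b} ha hb => Submodule.add_mem _ ha hb
        algebraMap_mem' := fun c => by
          show algebraMap K R c ∈ Submodule.span K S
          rw [Algebra.algebraMap_eq_smul_one]
          exact Submodule.smul_mem _ _ (Submodule.subset_span hone) }
    have hT : Algebra.adjoin K (↑s : Set R) ≤ T :=
      Algebra.adjoin_le fun r hr => Submodule.subset_span (hgen r hr)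
    rw [hs] at hT
    exact eq_top_iff.2 fun x _ => hT (by trivial)
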